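/- Let X be a complete metric space equipped with a nonexpansive, coordinatewise ρ-contractive k-mean μ (0 < ρ < 1). Then the barycentric operator β is power convergent, and the resulting (k+1)-mean μ̃ (defined by μ̃(x) = lim of the common value of β^n(x)) is nonexpansive and coordinatewise ρ-contractive. -/

import Mathlib

/-- A `k`-mean: idempotent on constant tuples. -/
def IsMean {X : Type*} {k : ℕ} (μ : (Fin k → X) → X) : Prop :=
  ∀ x : X, μ (fun _ => x) = x

/-- The barycentric operator: the `i`-th coordinate is the mean of the tuple
with the `i`-th coordinate deleted. -/
def bary {X : Type*} {k : ℕ} (μ : (Fin k → X) → X) (x : Fin (k+1) → X) : Fin (k+1) → X :=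
  fun i => μ (fun j => x (i.succAbove j))

/-- Nonexpansive mean: `d(μ x, μ y) ≤ max_j d(x_j, y_j)`. -/
def Nonexpansive {X : Type*} [MetricSpace X] {k : ℕ} (μ : (Fin k → X) → X) : Prop :=
  ∀ x y : Fin k → X, dist (μ x) (μ y) ≤ ⨆ j, dist (x j) (y j)

/-- Coordinatewise `ρ`-contractive mean. -/
def CoordContractive {X : Type*} [MetricSpace X] {k : ℕ} (ρ : ℝ) (μ : (Fin k → X) → X) : Prop :=
  ∀ (x y : Fin k → X) (j : Fin k), (∀ i, i ≠ j → x i = y i) →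
    dist (μ x) (μ y) ≤ ρ * dist (x j) (y j)

/-- Diameter of a tuple. -/
noncomputable def tupDiam {X : Type*} [MetricSpace X] {k : ℕ} (x : Fin k → X) : ℝ :=
  ⨆ p : Fin k × Fin k, dist (x p.1) (x p.2)

open Filter Topology

section AuxMean

variable {X : Type*} [MetricSpace X] {k : ℕ}

lemma bddAbove_range_fin {n : ℕ} (f : Fin n → ℝ) : BddAbove (Set.range f) :=
  (Set.finite_range f).bddAbove

/-- max of adjacent distances -/
noncomputable def adjSup (x : Fin (k+1) → X) : ℝ :=
  ⨆ i : Fin k, dist (x i.castSucc) (x i.succ)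

lemma le_adjSup (x : Fin (k+1) → X) (i : Fin k) :
    dist (x i.castSucc) (x i.succ) ≤ adjSup x :=
  le_ciSup (bddAbove_range_fin fun i : Fin k => dist (x i.castSucc) (x i.succ)) i

lemma adjSup_nonneg (hk : 0 < k) (x : Fin (k+1) → X) : 0 ≤ adjSup x := by
  haveI : Nonempty (Fin k) := ⟨⟨0, hk⟩⟩
  exact dist_nonneg.trans (le_adjSup x (Classical.arbitrary _))

/-- chain bound: any distance is at most `k` times the max adjacent distance. -/
lemma dist_le_adjSup (hk : 0 < k) (x : Fin (k+1) → X) (p q : Fin (k+1)) :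
    dist (x p) (x q) ≤ k * adjSup x := by
  haveI : Nonempty (Fin k) := ⟨⟨0, hk⟩⟩
  have hA : 0 ≤ adjSup x := adjSup_nonneg hk x
  have key : ∀ (m : ℕ) (p q : Fin (k+1)), q.val = p.val + m →
      dist (x p) (x q) ≤ m * adjSup x := by
    intro m
    induction m with
    | zero =>
      intro p q h
      have : p = q := Fin.ext (by omega)
      simp [this]
    | succ m ih =>
      intro p q h
      have hqlt : q.val < k + 1 := q.isLt
      have hlt : p.val + m < k := by omega
      set j : Fin k := ⟨p.val + m, hlt⟩ with hj
      have h1 : dist (x p) (x j.castSucc) ≤ m * adjSup x := ih p j.castSucc (by simp [hj])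
      have h2 : dist (x j.castSucc) (x j.succ) ≤ adjSup x := le_adjSup x j
      have hq' : q = j.succ := Fin.ext (by simp [hj]; omega)
      calc dist (x p) (x q) ≤ dist (x p) (x j.castSucc) + dist (x j.castSucc) (x q) :=
            dist_triangle _ _ _
        _ ≤ m * adjSup x + adjSup x := by rw [hq']; exact add_le_add h1 h2
        _ = (↑(m + 1)) * adjSup x := by push_cast; ring
  rcases le_total p.val q.val with h | h
  · have h1 := key (q.val - p.val) p q (by omega)
    refine h1.trans ?_
    have h2 : ((q.val - p.val : ℕ) : ℝ) ≤ (k : ℝ) := by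
      exact_mod_cast (by omega : q.val - p.val ≤ k)
    exact mul_le_mul_of_nonneg_right h2 hA
  · rw [dist_comm]
    have h1 := key (p.val - q.val) q p (by omega)
    refine h1.trans ?_
    have h2 : ((p.val - q.val : ℕ) : ℝ) ≤ (k : ℝ) := by
      exact_mod_cast (by omega : p.val - q.val ≤ k)
    exact mul_le_mul_of_nonneg_right h2 hA

variable {μ : (Fin k → X) → X}

/-- each coordinate of `bary` moves by at most the coordinatewise sup distance. -/
lemma bary_coord_le (hk : 0 < k) (hne : Nonexpansive μ) (x y : Fin (k+1) → X) (i : Fin (k+1)) :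
    dist (bary μ x i) (bary μ y i) ≤ ⨆ i, dist (x i) (y i) := by
  haveI : Nonempty (Fin k) := ⟨⟨0, hk⟩⟩
  exact (hne _ _).trans (ciSup_le fun j =>
    le_ciSup (bddAbove_range_fin fun i => dist (x i) (y i)) (i.succAbove j))

lemma iter_coord_le (hk : 0 < k) (hne : Nonexpansive μ) (n : ℕ) (x y : Fin (k+1) → X)
    (i : Fin (k+1)) :
    dist ((bary μ)^[n] x i) ((bary μ)^[n] y i) ≤ ⨆ i, dist (x i) (y i) := by
  induction n generalizing x y with
  | zero =>
    simpa using le_ciSup (bddAbove_range_fin fun i => dist (x i) (y i)) i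
  | succ n ih =>
    rw [Function.iterate_succ_apply, Function.iterate_succ_apply]
    exact (ih (bary μ x) (bary μ y)).trans (ciSup_le fun i' => bary_coord_le hk hne x y i')

lemma succAbove_eq_of_ne (i j : Fin k) (hj : j ≠ i) :
    (i.castSucc).succAbove j = (i.succ).succAbove j := by
  have hv : j.val ≠ i.val := fun h => hj (Fin.ext h)
  simp only [Fin.succAbove, Fin.lt_def, Fin.coe_castSucc, Fin.val_succ]
  rcases lt_or_gt_of_ne hv with h | h
  · rw [if_pos h, if_pos (by omega)]
  · rw [if_neg (by omega), if_neg (by omega)]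

lemma adjSup_bary_le {ρ : ℝ} (hk : 0 < k) (hρ0 : 0 < ρ) (hcon : CoordContractive ρ μ)
    (x : Fin (k+1) → X) : adjSup (bary μ x) ≤ ρ * adjSup x := by
  haveI : Nonempty (Fin k) := ⟨⟨0, hk⟩⟩
  refine ciSup_le fun i => ?_
  have hadj : dist (bary μ x i.castSucc) (bary μ x i.succ)
      ≤ ρ * dist (x i.castSucc) (x i.succ) := by
    have h := hcon (fun j => x (i.castSucc.succAbove j)) (fun j => x (i.succ.succAbove j)) i
      (fun j hj => by
        show x (i.castSucc.succAbove j) = x (i.succ.succAbove j)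
        rw [succAbove_eq_of_ne i j hj])
    simpa [bary, Fin.succAbove_castSucc_self, Fin.succAbove_succ_self, dist_comm] using h
  exact hadj.trans (mul_le_mul_of_nonneg_left (le_adjSup x i) hρ0.le)

lemma bary_step_le (hk : 0 < k) (hmean : IsMean μ) (hne : Nonexpansive μ)
    (x : Fin (k+1) → X) (i : Fin (k+1)) :
    dist (bary μ x i) (x i) ≤ k * adjSup x := by
  haveI : Nonempty (Fin k) := ⟨⟨0, hk⟩⟩
  calc dist (bary μ x i) (x i)
      = dist (μ fun j => x (i.succAbove j)) (μ fun _ => x i) := by rw [hmean (x i)]; rfl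
    _ ≤ ⨆ j, dist (x (i.succAbove j)) (x i) := hne _ _
    _ ≤ k * adjSup x := ciSup_le fun j => dist_le_adjSup hk x _ i

lemma bary_iter_conv {ρ : ℝ} (hk : 0 < k) (hρ0 : 0 < ρ) (hρ1 : ρ < 1)
    (hmean : IsMean μ) (hne : Nonexpansive μ) (hcon : CoordContractive ρ μ)
    [CompleteSpace X] (x : Fin (k+1) → X) :
    ∃ L : X, ∀ i, Tendsto (fun n => (bary μ)^[n] x i) atTop (nhds L) := by
  haveI : Nonempty (Fin k) := ⟨⟨0, hk⟩⟩
  set A := adjSup x with hA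
  have hiter : ∀ n, adjSup ((bary μ)^[n] x) ≤ ρ ^ n * A := by
    intro n
    induction n with
    | zero => simp [hA]
    | succ n ih =>
      rw [Function.iterate_succ_apply']
      calc adjSup (bary μ ((bary μ)^[n] x)) ≤ ρ * adjSup ((bary μ)^[n] x) :=
            adjSup_bary_le hk hρ0 hcon _
        _ ≤ ρ * (ρ ^ n * A) := mul_le_mul_of_nonneg_left ih hρ0.le
        _ = ρ ^ (n + 1) * A := by ring
  have hd : ∀ n (i : Fin (k+1)),
      dist ((bary μ)^[n] x i) ((bary μ)^[n+1] x i) ≤ (k * A) * ρ ^ n := by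
    intro n i
    rw [dist_comm, Function.iterate_succ_apply']
    calc dist (bary μ ((bary μ)^[n] x) i) ((bary μ)^[n] x i)
        ≤ k * adjSup ((bary μ)^[n] x) := bary_step_le hk hmean hne _ i
      _ ≤ k * (ρ ^ n * A) := mul_le_mul_of_nonneg_left (hiter n) (Nat.cast_nonneg k)
      _ = (k * A) * ρ ^ n := by ring
  have hcauchy : CauchySeq (fun n => (bary μ)^[n] x 0) :=
    cauchySeq_of_le_geometric ρ (k * A) hρ1 (fun n => hd n 0)
  obtain ⟨L, hL⟩ := cauchySeq_tendsto_of_complete hcauchy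
  refine ⟨L, fun i => ?_⟩
  have hdist0 : ∀ n, dist ((bary μ)^[n] x i) ((bary μ)^[n] x 0) ≤ (k * A) * ρ ^ n := by
    intro n
    calc dist ((bary μ)^[n] x i) ((bary μ)^[n] x 0) ≤ k * adjSup ((bary μ)^[n] x) :=
          dist_le_adjSup hk _ i 0
      _ ≤ k * (ρ ^ n * A) := mul_le_mul_of_nonneg_left (hiter n) (Nat.cast_nonneg k)
      _ = (k * A) * ρ ^ n := by ring
  have hzero : Tendsto (fun n => dist ((bary μ)^[n] x 0) ((bary μ)^[n] x i)) atTop (nhds 0) := by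
    have hpow : Tendsto (fun n : ℕ => (k * A) * ρ ^ n) atTop (nhds 0) := by
      simpa using (tendsto_pow_atTop_nhds_zero_of_lt_one hρ0.le hρ1).const_mul (k * A : ℝ)
    refine squeeze_zero (fun n => dist_nonneg) (fun n => ?_) hpow
    rw [dist_comm]; exact hdist0 n
  exact hL.congr_dist hzero

end AuxMean

theorem extension_exists_nonexpansive_contractive {X : Type*} [MetricSpace X] [CompleteSpace X]
    {k : ℕ} (hk : 2 ≤ k) (μ : (Fin k → X) → X) {ρ : ℝ} (hρ0 : 0 < ρ) (hρ1 : ρ < 1)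
    (hmean : IsMean μ) (hne : Nonexpansive μ) (hcon : CoordContractive ρ μ) :
    ∃ ν : (Fin (k+1) → X) → X,
      (∀ x : Fin (k+1) → X,
        Filter.Tendsto (fun n => (bary μ)^[n] x) Filter.atTop (nhds fun _ => ν x)) ∧
      IsMean ν ∧ Nonexpansive ν ∧ CoordContractive ρ ν := by
  have hk0 : 0 < k := by omega
  haveI : Nonempty (Fin k) := ⟨⟨0, hk0⟩⟩
  choose ν hν using fun x => bary_iter_conv hk0 hρ0 hρ1 hmean hne hcon x
  refine ⟨ν, ?_, ?_, ?_, ?_⟩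
  · intro x
    rw [tendsto_pi_nhds]
    exact hν x
  · intro x
    have hfix : bary μ (fun _ => x) = fun _ => x := funext fun i => hmean x
    have hconst : (fun n => (bary μ)^[n] (fun _ : Fin (k+1) => x) 0) = fun _ => x :=
      funext fun n => by rw [Function.iterate_fixed hfix]
    have h := hν (fun _ => x) 0
    rw [hconst] at h
    exact tendsto_nhds_unique h tendsto_const_nhds
  · intro x y
    have hlim : Filter.Tendsto (fun n => dist ((bary μ)^[n] x 0) ((bary μ)^[n] y 0))
        Filter.atTop (nhds (dist (ν x) (ν y))) := (hν x 0).dist (hν y 0)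
    exact le_of_tendsto hlim (Filter.Eventually.of_forall fun n => iter_coord_le hk0 hne n x y 0)
  · intro x y j hxy
    have hone : ∀ i, dist (bary μ x i) (bary μ y i) ≤ ρ * dist (x j) (y j) := by
      intro i
      by_cases h : i = j
      · subst h
        have heq : (fun j' => x (i.succAbove j')) = fun j' => y (i.succAbove j') :=
          funext fun j' => hxy _ (Fin.succAbove_ne i j')
        show dist (μ fun j' => x (i.succAbove j')) (μ fun j' => y (i.succAbove j')) ≤ _
        rw [heq, dist_self]
        exact mul_nonneg hρ0.le dist_nonneg
      · obtain ⟨j₀, hj₀⟩ := Fin.exists_succAbove_eq (Ne.symm h)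
        have h2 := hcon (fun j' => x (i.succAbove j')) (fun j' => y (i.succAbove j')) j₀
          (fun j' hj' => hxy _ (fun hc => hj' (Fin.succAbove_right_injective (hc.trans hj₀.symm))))
        simp only [hj₀] at h2
        exact h2
    have hsup : (⨆ i, dist (bary μ x i) (bary μ y i)) ≤ ρ * dist (x j) (y j) := ciSup_le hone
    have hn : ∀ n, dist ((bary μ)^[n+1] x 0) ((bary μ)^[n+1] y 0) ≤ ρ * dist (x j) (y j) := by
      intro n
      rw [Function.iterate_succ_apply, Function.iterate_succ_apply]
      exact (iter_coord_le hk0 hne n (bary μ x) (bary μ y) 0).trans hsup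
    have hlim : Filter.Tendsto (fun n => dist ((bary μ)^[n] x 0) ((bary μ)^[n] y 0))
        Filter.atTop (nhds (dist (ν x) (ν y))) := (hν x 0).dist (hν y 0)
    refine le_of_tendsto hlim ?_
    rw [Filter.eventually_atTop]
    exact ⟨1, fun n hn1 => by
      obtain ⟨m, rfl⟩ := Nat.exists_eq_succ_of_ne_zero (by omega : n ≠ 0)
      exact hn m⟩
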